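/- For every integer k ≥ 1, the graph H_k is (k+1)-γ'_MB-critical; that is, γ'_MB(H_k) = k+1 and γ'_MB(H_k − e) > k+1 for every edge e of H_k. -/

import Mathlib

/-!
Maker–Breaker domination game.  The players Dominator and Staller alternately select
previously unselected vertices of a graph `G`.  Dominator wins if at some point his selected
vertices form a dominating set of `G`; Staller wins if she selects all vertices of the closed
neighbourhood of some vertex.  Below, `D` always denotes the set of vertices selected by
Dominator so far and `S` the set selected by Staller.
-/

namespace MBD

variable {V : Type*}

/-- `D` is a dominating set of `G`. -/
def IsDomSet (G : SimpleGraph V) (D : Set V) : Prop :=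
  ∀ v, v ∈ D ∨ ∃ u ∈ D, G.Adj u v

/-- Dominator is to move.  `DWin G k D S` says that Dominator has a strategy guaranteeing
that his selected set becomes a dominating set of `G` after at most `k` further moves of his
(the game ends when all vertices have been selected). -/
def DWin (G : SimpleGraph V) : ℕ → Set V → Set V → Prop
  | 0, D, _ => IsDomSet G D
  | (k+1), D, S => IsDomSet G D ∨
      ∃ v ∉ D ∪ S,
        (IsDomSet G (insert v D) ∨
          ((∃ w, w ∉ insert v D ∪ S) ∧
            ∀ w ∉ insert v D ∪ S, DWin G k (insert v D) (insert w S)))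

/-- Staller is to move, and Dominator can win using at most `k` further moves of his. -/
def DWinS (G : SimpleGraph V) (k : ℕ) (D S : Set V) : Prop :=
  IsDomSet G D ∨
    ((∃ w, w ∉ D ∪ S) ∧ ∀ w ∉ D ∪ S, DWin G k D (insert w S))

/-- The Maker–Breaker domination number `γ_MB` of `G`: the least `k` such that Dominator,
moving first (D-game), can win within at most `k` of his moves; `∞` if he cannot win. -/
noncomputable def gammaMB (G : SimpleGraph V) : ℕ∞ :=
  sInf (Nat.cast '' {k : ℕ | DWin G k ∅ ∅})

/-- The Maker–Breaker domination number `γ'_MB` of `G`: the least `k` such that Dominator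
can win within at most `k` of his moves in the S-game (Staller moves first); `∞` if he
cannot win. -/
noncomputable def gammaMB' (G : SimpleGraph V) : ℕ∞ :=
  sInf (Nat.cast '' {k : ℕ | DWinS G k ∅ ∅})

/-- Staller has won: she has selected all vertices of the closed neighbourhood `N[v]`
of some vertex `v`. -/
def IsStallerWin (G : SimpleGraph V) (S : Set V) : Prop :=
  ∃ v, v ∈ S ∧ ∀ u, G.Adj v u → u ∈ S

/-- Staller is to move.  `SWin G k D S` says Staller has a strategy to win using at most `k`
further moves of hers. -/
def SWin (G : SimpleGraph V) : ℕ → Set V → Set V → Prop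
  | 0, _, S => IsStallerWin G S
  | (k+1), D, S => IsStallerWin G S ∨
      ∃ v ∉ D ∪ S,
        (IsStallerWin G (insert v S) ∨
          ((∃ w, w ∉ D ∪ insert v S) ∧
            ∀ w ∉ D ∪ insert v S, SWin G k (insert w D) (insert v S)))

/-- Dominator is to move, and Staller can win within at most `k` further moves of hers. -/
def SWinD (G : SimpleGraph V) (k : ℕ) (D S : Set V) : Prop :=
  IsStallerWin G S ∨
    ((∃ w, w ∉ D ∪ S) ∧ ∀ w ∉ D ∪ S, SWin G k (insert w D) S)

/-- The Staller-Maker–Breaker domination number `γ_SMB` of `G`: the least `k` such that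
Staller can win within at most `k` of her moves in the D-game (Dominator starts);
`∞` if she cannot win. -/
noncomputable def gammaSMB (G : SimpleGraph V) : ℕ∞ :=
  sInf (Nat.cast '' {k : ℕ | SWinD G k ∅ ∅})

/-- The Staller-Maker–Breaker domination number `γ'_SMB` of `G`: the least `k` such that
Staller can win within at most `k` of her moves in the S-game (Staller starts);
`∞` if she cannot win. -/
noncomputable def gammaSMB' (G : SimpleGraph V) : ℕ∞ :=
  sInf (Nat.cast '' {k : ℕ | SWin G k ∅ ∅})

end MBD

open MBD

/-- The graph `H_k`: `k+1` disjoint copies of `K_{2,3}` indexed by `i : Fin (k+1)`, the `i`-th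
copy having bipartition `{x_i, x_i'} = {(i,0),(i,1)}` and `{y_i, y_i', y_i''} = {(i,2),(i,3),(i,4)}`,
together with all edges between each of `x_{k+1} = (k,0)`, `x_{k+1}' = (k,1)` and all of the
vertices `x_i, x_i'` with `i ∈ [k]`. -/
def HkGraph (k : ℕ) : SimpleGraph (Fin (k+1) × Fin 5) :=
  SimpleGraph.fromRel (fun a b =>
    (a.1 = b.1 ∧ a.2.val ≤ 1 ∧ 2 ≤ b.2.val) ∨
    (a.1.val = k ∧ b.1.val ≠ k ∧ a.2.val ≤ 1 ∧ b.2.val ≤ 1))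

-- ===== basic adjacency =====

lemma hk_adj {k : ℕ} {a b : Fin (k+1) × Fin 5} : (HkGraph k).Adj a b ↔
    (a.1 = b.1 ∧ ((a.2.val ≤ 1 ∧ 2 ≤ b.2.val) ∨ (b.2.val ≤ 1 ∧ 2 ≤ a.2.val))) ∨
    (a.1 ≠ b.1 ∧ a.2.val ≤ 1 ∧ b.2.val ≤ 1 ∧ (a.1.val = k ∨ b.1.val = k)) := by
  rw [HkGraph, SimpleGraph.fromRel_adj]
  constructor
  · rintro ⟨hne, (h | h) | (h | h)⟩
    · exact Or.inl ⟨h.1, Or.inl h.2⟩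
    · exact Or.inr ⟨fun he => h.2.1 (he ▸ h.1), h.2.2.1, h.2.2.2, Or.inl h.1⟩
    · exact Or.inl ⟨h.1.symm, Or.inr h.2⟩
    · exact Or.inr ⟨fun he => h.2.1 (he ▸ h.1), h.2.2.2, h.2.2.1, Or.inr h.1⟩
  · have hvne : a.1 ≠ b.1 ↔ a.1.val ≠ b.1.val := by
      constructor
      · intro h h'; exact h (Fin.ext h')
      · intro h h'; exact h (congrArg Fin.val h')
    have hab : a.2.val ≠ b.2.val → a ≠ b := fun h he => h (congrArg (fun p => (Prod.snd p).val) he)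
    rintro (⟨h1, h | h⟩ | ⟨hne, ha, hb, hc | hc⟩)
    · exact ⟨hab (by omega), Or.inl (Or.inl ⟨h1, h⟩)⟩
    · exact ⟨hab (by omega), Or.inr (Or.inl ⟨h1.symm, h⟩)⟩
    · exact ⟨fun he => hne (congrArg Prod.fst he),
        Or.inl (Or.inr ⟨hc, by rw [hvne] at hne; omega, ha, hb⟩)⟩
    · exact ⟨fun he => hne (congrArg Prod.fst he),
        Or.inr (Or.inr ⟨hc, by rw [hvne] at hne; omega, hb, ha⟩)⟩

-- ===== extraction lemma =====

lemma dwin_extract {W : Type*} [DecidableEq W] (G : SimpleGraph W) :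
    ∀ (m : ℕ) (D S : Set W), DWin G m D S →
      ∃ T : Finset W, T.card ≤ m ∧ (∀ t ∈ T, t ∉ S) ∧ IsDomSet G (D ∪ ↑T) := by
  intro m
  induction m with
  | zero =>
    intro D S h
    exact ⟨∅, le_refl _, by simp, by rw [DWin] at h; simpa using h⟩
  | succ m ih =>
    intro D S h
    rcases h with h | ⟨v, hv, h⟩
    · exact ⟨∅, by simp, by simp, by simpa using h⟩
    · rcases h with h | ⟨⟨w0, hw0⟩, hall⟩
      · refine ⟨{v}, by simp, ?_, ?_⟩
        · intro t ht
          simp only [Finset.mem_singleton] at ht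
          subst ht
          exact fun hS => hv (Or.inr hS)
        · rw [Finset.coe_singleton, Set.union_singleton]; exact h
      · obtain ⟨T', hc, hdisj, hdom⟩ := ih (insert v D) (insert w0 S) (hall w0 hw0)
        refine ⟨insert v T', ?_, ?_, ?_⟩
        · calc (insert v T').card ≤ T'.card + 1 := Finset.card_insert_le _ _
            _ ≤ m + 1 := by omega
        · intro t ht
          rcases Finset.mem_insert.1 ht with rfl | ht'
          · exact fun hS => hv (Or.inr hS)
          · exact fun hS => hdisj t ht' (Set.mem_insert_of_mem _ hS)
        · have : D ∪ ↑(insert v T') = insert v D ∪ ↑T' := by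
            rw [Finset.coe_insert, Set.union_insert, Set.insert_union]
          rw [this]
          exact hdom

-- ===== counting lemmas =====

variable {k : ℕ}

lemma dom_fiber {G' : SimpleGraph (Fin (k+1) × Fin 5)}
    (hsub : ∀ a b, G'.Adj a b → (HkGraph k).Adj a b)
    {T : Finset (Fin (k+1) × Fin 5)} (hdom : IsDomSet G' ↑T) (i : Fin (k+1)) :
    ∃ t ∈ T, t.1 = i := by
  rcases hdom (i, (2 : Fin 5)) with h | ⟨u, hu, hadj⟩
  · exact ⟨(i, 2), h, rfl⟩
  · refine ⟨u, hu, ?_⟩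
    rcases hk_adj.1 (hsub _ _ hadj) with ⟨h1, h | h⟩ | ⟨_, _, hb, _⟩
    · exact h1
    · simp at h
    · simp at hb

lemma dom_card_lb {G' : SimpleGraph (Fin (k+1) × Fin 5)}
    (hsub : ∀ a b, G'.Adj a b → (HkGraph k).Adj a b)
    {T : Finset (Fin (k+1) × Fin 5)} (hdom : IsDomSet G' ↑T) :
    k + 1 ≤ T.card := by
  have hs : Set.SurjOn Prod.fst (↑T : Set (Fin (k+1) × Fin 5)) (↑(Finset.univ : Finset (Fin (k+1))) : Set (Fin (k+1))) := by
    intro i _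
    obtain ⟨t, ht, h⟩ := dom_fiber hsub hdom i
    exact ⟨t, ht, h⟩
  have := Finset.card_le_card_of_surjOn Prod.fst hs
  simpa using this

lemma dom_card_lb2 {G' : SimpleGraph (Fin (k+1) × Fin 5)}
    (hsub : ∀ a b, G'.Adj a b → (HkGraph k).Adj a b)
    {T : Finset (Fin (k+1) × Fin 5)} (hdom : IsDomSet G' ↑T) (i : Fin (k+1))
    {t0 t1 : Fin (k+1) × Fin 5} (h0 : t0 ∈ T) (h1 : t1 ∈ T)
    (hf0 : t0.1 = i) (hf1 : t1.1 = i) (hne : t0 ≠ t1) :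
    k + 2 ≤ T.card := by
  classical
  have hsplit := Finset.card_filter_add_card_filter_not (s := T) (p := fun p => p.1 = i)
  have hA : 2 ≤ (T.filter (fun p => p.1 = i)).card := by
    refine Finset.one_lt_card.2 ⟨t0, ?_, t1, ?_, hne⟩ <;>
      simp [Finset.mem_filter, h0, h1, hf0, hf1]
  have hB : k ≤ (T.filter (fun p => ¬ p.1 = i)).card := by
    have hs : Set.SurjOn Prod.fst (↑(T.filter (fun p => ¬ p.1 = i)) : Set (Fin (k+1) × Fin 5))
        (↑((Finset.univ : Finset (Fin (k+1))).erase i) : Set (Fin (k+1))) := by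
      intro j hj
      simp only [Finset.coe_erase, Set.mem_diff, Set.mem_singleton_iff] at hj
      obtain ⟨t, ht, h⟩ := dom_fiber hsub hdom j
      refine ⟨t, ?_, h⟩
      simp only [Finset.coe_filter, Set.mem_setOf_eq]
      exact ⟨ht, by rw [h]; exact hj.2⟩
    have := Finset.card_le_card_of_surjOn Prod.fst hs
    simpa using this
  omega

-- ===== transversal dominates =====

lemma transversal_isDom (hk : 1 ≤ k) (g : Fin (k+1) → Fin 5)
    (hg : ∀ i, g i = 0 ∨ g i = 1) (D : Set (Fin (k+1) × Fin 5))
    (hD : ∀ i, ((i, g i) : Fin (k+1) × Fin 5) ∈ D) : IsDomSet (HkGraph k) D := by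
  have hgv : ∀ i, (g i).val ≤ 1 := by
    intro i; rcases hg i with h | h <;> simp [h]
  rintro ⟨i, c⟩
  by_cases hc : c = g i
  · exact Or.inl (hc ▸ hD i)
  by_cases h2 : 2 ≤ c.val
  · refine Or.inr ⟨(i, g i), hD i, hk_adj.2 (Or.inl ⟨rfl, Or.inl ⟨hgv i, h2⟩⟩)⟩
  · by_cases hik : i.val = k
    · refine Or.inr ⟨((0 : Fin (k+1)), g 0), hD 0, hk_adj.2 (Or.inr ⟨?_, hgv 0, (show c.val ≤ 1 by omega), Or.inr hik⟩)⟩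
      intro h
      have := congrArg Fin.val h
      simp at this
      omega
    · refine Or.inr ⟨(Fin.last k, g (Fin.last k)), hD _, hk_adj.2 (Or.inr ⟨?_, hgv _, (show c.val ≤ 1 by omega), Or.inl (by simp)⟩)⟩
      intro h
      have := congrArg Fin.val h
      simp [Fin.last] at this
      omega

-- ===== Dominator's strategy =====

lemma dwin_strategy (hk : 1 ≤ k) :
    ∀ (m : ℕ) (A : Finset (Fin (k+1))) (f : Fin (k+1) → Fin 5)
      (SF : Finset (Fin (k+1) × Fin 5)),
      Aᶜ.card = m + 1 →
      (∀ i, f i = 0 ∨ f i = 1) →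
      SF.card + m ≤ k + 1 →
      (∀ i ∉ A, ((i,(0:Fin 5))) ∉ SF ∨ ((i,(1:Fin 5))) ∉ SF) →
      (∃ i0, ∀ i ∉ A, i ≠ i0 → ((i,(0:Fin 5))) ∉ SF ∧ ((i,(1:Fin 5))) ∉ SF) →
      DWin (HkGraph k) (m+1) (↑(A.image (fun i => (i, f i)))) ↑SF := by
  intro m
  induction m with
  | zero =>
    intro A f SF hA hf _hS h1 _h2
    obtain ⟨i1, hAc⟩ := Finset.card_eq_one.1 hA
    have hi1 : i1 ∉ A := by
      have : i1 ∈ Aᶜ := by rw [hAc]; exact Finset.mem_singleton_self i1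
      simpa using this
    set c : Fin 5 := if ((i1,(0:Fin 5))) ∈ SF then 1 else 0 with hcdef
    have hc01 : c = 0 ∨ c = 1 := by
      by_cases h : ((i1,(0:Fin 5))) ∈ SF <;> simp [hcdef, h]
    have hcS : ((i1, c)) ∉ SF := by
      by_cases h : ((i1,(0:Fin 5))) ∈ SF
      · rcases h1 i1 hi1 with h' | h'
        · exact absurd h h'
        · simpa [hcdef, h] using h'
      · simpa [hcdef, h] using h
    rw [DWin]
    refine Or.inr ⟨(i1,c), ?_, Or.inl ?_⟩
    · rintro (hd | hs)
      · obtain ⟨j, hj, hje⟩ := Finset.mem_image.1 (Finset.mem_coe.1 hd)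
        have : j = i1 := congrArg Prod.fst hje
        exact hi1 (this ▸ hj)
      · exact hcS (Finset.mem_coe.1 hs)
    · refine transversal_isDom hk (Function.update f i1 c) ?_ _ ?_
      · intro i
        by_cases h : i = i1
        · subst h; simpa using hc01
        · rw [Function.update_of_ne h]; exact hf i
      · intro i
        by_cases h : i = i1
        · subst h; rw [Function.update_self]; exact Set.mem_insert _ _
        · have hiA : i ∈ A := by
            by_contra hiA
            have : i ∈ Aᶜ := Finset.mem_compl.2 hiA
            rw [hAc] at this
            exact h (Finset.mem_singleton.1 this)
          refine Set.mem_insert_of_mem _ (Finset.mem_coe.2 (Finset.mem_image.2 ⟨i, hiA, ?_⟩))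
          rw [Function.update_of_ne h]
  | succ n ih =>
    intro A f SF hA hf hS h1 h2
    obtain ⟨i0, h2⟩ := h2
    obtain ⟨i1, hi1, hi1e⟩ : ∃ i1, i1 ∉ A ∧ (i0 ∉ A → i1 = i0) := by
      by_cases h : i0 ∈ A
      · have : Aᶜ.Nonempty := by rw [← Finset.card_pos, hA]; omega
        obtain ⟨x, hx⟩ := this
        exact ⟨x, Finset.mem_compl.1 hx, fun h' => absurd h h'⟩
      · exact ⟨i0, h, fun _ => rfl⟩
    set c : Fin 5 := if ((i1,(0:Fin 5))) ∈ SF then 1 else 0 with hcdef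
    have hc01 : c = 0 ∨ c = 1 := by
      by_cases h : ((i1,(0:Fin 5))) ∈ SF <;> simp [hcdef, h]
    have hcS : ((i1, c)) ∉ SF := by
      by_cases h : ((i1,(0:Fin 5))) ∈ SF
      · rcases h1 i1 hi1 with h' | h'
        · exact absurd h h'
        · simpa [hcdef, h] using h'
      · simpa [hcdef, h] using h
    have hveqD : (insert ((i1,c)) (↑(A.image fun i => (i, f i)) : Set (Fin (k+1) × Fin 5)))
        = ↑((insert i1 A).image fun i => (i, Function.update f i1 c i)) := by
      rw [Finset.image_insert, Finset.coe_insert, Function.update_self]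
      have : A.image (fun i => (i, Function.update f i1 c i)) = A.image (fun i => (i, f i)) := by
        refine Finset.image_congr ?_
        intro i hi
        have hne : i ≠ i1 := fun h => hi1 (h ▸ Finset.mem_coe.1 hi)
        simp [Function.update_of_ne hne]
      rw [this]
    rw [DWin]
    refine Or.inr ⟨(i1,c), ?_, Or.inr ⟨?_, ?_⟩⟩
    · rintro (hd | hs)
      · obtain ⟨j, hj, hje⟩ := Finset.mem_image.1 (Finset.mem_coe.1 hd)
        have : j = i1 := congrArg Prod.fst hje
        exact hi1 (this ▸ hj)
      · exact hcS (Finset.mem_coe.1 hs)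
    · -- a fresh vertex exists
      by_contra hno
      push_neg at hno
      have hsub : (Finset.univ : Finset (Fin (k+1) × Fin 5)) ⊆
          insert ((i1,c)) (A.image fun i => (i, f i)) ∪ SF := by
        intro w _
        have hw := hno w
        rcases hw with h | h
        · rcases Set.mem_insert_iff.1 h with h' | h'
          · exact Finset.mem_union_left _ (h' ▸ Finset.mem_insert_self _ _)
          · exact Finset.mem_union_left _ (Finset.mem_insert_of_mem (Finset.mem_coe.1 h'))
        · exact Finset.mem_union_right _ (Finset.mem_coe.1 h)
      have hcard := Finset.card_le_card hsub
      have h5 : (Finset.univ : Finset (Fin (k+1) × Fin 5)).card = (k+1) * 5 := by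
        simp [Finset.card_univ]
      have hu := Finset.card_union_le (insert ((i1,c)) (A.image fun i => (i, f i))) SF
      have hins := Finset.card_insert_le ((i1,c)) (A.image fun i => (i, f i))
      have him := Finset.card_image_le (s := A) (f := fun i => (i, f i))
      have hAu : A.card ≤ k + 1 := le_trans (Finset.card_le_univ A) (by simp)
      omega
    · intro w hw
      rw [hveqD, show (insert w (↑SF : Set (Fin (k+1) × Fin 5))) = ↑(insert w SF) from
        (Finset.coe_insert w SF).symm]
      have hfresh : ∀ i, i ∉ insert i1 A → i ≠ i0 ∧
          ((i,(0:Fin 5))) ∉ SF ∧ ((i,(1:Fin 5))) ∉ SF := by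
        intro i hiA'
        have hiA : i ∉ A := fun h => hiA' (Finset.mem_insert_of_mem h)
        have hii1 : i ≠ i1 := fun h => hiA' (h ▸ Finset.mem_insert_self _ _)
        have hii0 : i ≠ i0 := by
          intro h
          by_cases h' : i0 ∈ A
          · exact hiA (h ▸ h')
          · exact hii1 (by rw [h, hi1e h'])
        exact ⟨hii0, h2 i hiA hii0⟩
      refine ih (insert i1 A) (Function.update f i1 c) (insert w SF) ?_ ?_ ?_ ?_ ⟨w.1, ?_⟩
      · rw [Finset.compl_insert, Finset.card_erase_of_mem (Finset.mem_compl.2 hi1), hA]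
        omega
      · intro i
        by_cases h : i = i1
        · subst h; rw [Function.update_self]; exact hc01
        · rw [Function.update_of_ne h]; exact hf i
      · have := Finset.card_insert_le w SF; omega
      · intro i hiA'
        obtain ⟨_, hb0, hb1⟩ := hfresh i hiA'
        by_cases hw0 : w = ((i, (0:Fin 5)))
        · right
          intro hmem
          rcases Finset.mem_insert.1 hmem with h | h
          · rw [hw0] at h
            exact absurd (congrArg (fun p => (Prod.snd p).val) h) (by simp)
          · exact hb1 h
        · left
          intro hmem
          rcases Finset.mem_insert.1 hmem with h | h
          · exact hw0 h.symm
          · exact hb0 h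
      · intro i hiA' hiw
        obtain ⟨_, hb0, hb1⟩ := hfresh i hiA'
        constructor <;> intro hmem <;> rcases Finset.mem_insert.1 hmem with h | h
        · exact hiw (by rw [← h])
        · exact hb0 h
        · exact hiw (by rw [← h])
        · exact hb1 h

-- ===== part 1 assembly =====

lemma hk_upper (hk : 1 ≤ k) : DWinS (HkGraph k) (k+1) ∅ ∅ := by
  refine Or.inr ⟨⟨((0:Fin (k+1)), (0:Fin 5)), by simp⟩, ?_⟩
  intro w _
  have H := dwin_strategy hk k ∅ (fun _ => 0) {w} (by simp) (fun _ => Or.inl rfl)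
    (by simp; omega) ?_ ⟨w.1, ?_⟩
  · simpa using H
  · intro i _
    by_cases h0 : ((i,(0:Fin 5))) = w
    · right
      simp only [Finset.mem_singleton]
      intro h1
      have := h1.trans h0.symm
      exact absurd (congrArg (fun p => (Prod.snd p).val) this) (by simp)
    · left; simpa using h0
  · intro i _ hiw
    constructor <;> simp only [Finset.mem_singleton] <;> intro h <;>
      exact hiw (by rw [← h])

lemma hk_lower (m : ℕ) (h : DWinS (HkGraph k) m ∅ ∅) : k + 1 ≤ m := by
  classical
  rcases h with h | ⟨⟨w, hw⟩, hall⟩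
  · have := dom_card_lb (G' := HkGraph k) (fun _ _ h => h)
      (T := (∅ : Finset (Fin (k+1) × Fin 5))) (by simpa using h)
    simpa using this
  · obtain ⟨T, hc, _, hdom⟩ := dwin_extract _ m ∅ _ (hall w hw)
    have := dom_card_lb (G' := HkGraph k) (fun _ _ h => h) (T := T) (by simpa using hdom)
    omega

lemma hk_gamma (hk : 1 ≤ k) : gammaMB' (HkGraph k) = (k:ℕ∞)+1 := by
  apply le_antisymm
  · have hmem : ((k+1 : ℕ) : ℕ∞) ∈ Nat.cast '' {m : ℕ | DWinS (HkGraph k) m ∅ ∅} :=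
      ⟨k+1, hk_upper hk, rfl⟩
    have h := sInf_le hmem
    simpa [gammaMB'] using h
  · refine le_sInf ?_
    rintro x ⟨m, hm, rfl⟩
    have := hk_lower m hm
    exact_mod_cast this

-- ===== flip helpers =====

def flipx (a : Fin 5) : Fin 5 := if a.val = 0 then 1 else 0

lemma flipx_le (a : Fin 5) : (flipx a).val ≤ 1 := by
  by_cases h : a.val = 0 <;> simp [flipx, h]

lemma flipx_ne (a : Fin 5) (ha : a.val ≤ 1) : flipx a ≠ a := by
  by_cases h : a.val = 0 <;> simp [flipx, h, Fin.ext_iff] <;> omega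

lemma fin5_two (a : Fin 5) (ha : a.val ≤ 1) (b : Fin 5) (hb : b.val ≤ 1) :
    b = a ∨ b = flipx a := by
  revert a ha b hb
  decide

-- ===== criticality: within-copy edges =====

lemma crit_xy (hk : 1 ≤ k) (i : Fin (k+1)) (a b : Fin 5) (ha : a.val ≤ 1) (hb : 2 ≤ b.val)
    (m : ℕ) (hm : m ≤ k + 1)
    (h : DWinS ((HkGraph k).deleteEdges {s(((i,a) : Fin (k+1) × Fin 5),((i,b)))}) m ∅ ∅) :
    False := by
  classical
  set e := s(((i,a) : Fin (k+1) × Fin 5),((i,b))) with he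
  set G' := (HkGraph k).deleteEdges {e} with hG'
  have hsub : ∀ u v, G'.Adj u v → (HkGraph k).Adj u v :=
    fun u v h => (SimpleGraph.deleteEdges_adj.1 h).1
  set oa : Fin 5 := flipx a with hoadef
  rcases h with h | ⟨_, hall⟩
  · have := dom_card_lb hsub (T := (∅ : Finset (Fin (k+1) × Fin 5))) (by simpa using h)
    simpa using this
  · have h1 := hall ((i,oa)) (by simp)
    obtain ⟨T, hc, hdisj, hdom⟩ := dwin_extract G' m ∅ _ h1
    have hdomT : IsDomSet G' ↑T := by simpa using hdom
    have hoaT : ((i,oa)) ∉ T := fun h => hdisj _ h (Set.mem_insert _ _)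
    have hbT : ((i,b)) ∈ T := by
      rcases hdomT ((i,b)) with h | ⟨u, hu, hadj⟩
      · exact h
      · exfalso
        obtain ⟨hadj', hne⟩ := SimpleGraph.deleteEdges_adj.1 hadj
        have hu1 : u.1 = i ∧ u.2.val ≤ 1 := by
          rcases hk_adj.1 hadj' with ⟨h1', hcs | hcs⟩ | ⟨_, _, hb2, _⟩
          · exact ⟨h1', hcs.1⟩
          · exact absurd hcs.1 (by simp only []; omega)
          · exact absurd hb2 (by simp only []; omega)
        rcases fin5_two a ha u.2 hu1.2 with h' | h'
        · have hu : u = ((i,a)) := Prod.ext hu1.1 h'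
          exact hne (by rw [hu]; exact Set.mem_singleton _)
        · have hue : u = ((i,oa)) := Prod.ext hu1.1 h'
          exact hoaT (hue ▸ hu)
    set c' : Fin 5 := if b.val = 2 then 3 else 2 with hc'def
    have hc'2 : 2 ≤ c'.val ∧ c' ≠ b := by
      by_cases h : b.val = 2 <;> simp [hc'def, h, Fin.ext_iff] <;> omega
    obtain ⟨t1, ht1T, ht1i, ht1ne⟩ : ∃ t1 ∈ T, t1.1 = i ∧ ((i,b)) ≠ t1 := by
      rcases hdomT ((i,c')) with h | ⟨u, hu, hadj⟩
      · refine ⟨(i,c'), h, rfl, ?_⟩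
        intro h'
        exact hc'2.2 (congrArg Prod.snd h').symm
      · have hu1 : u.1 = i ∧ u.2.val ≤ 1 := by
          rcases hk_adj.1 (hsub _ _ hadj) with ⟨h1', hcs | hcs⟩ | ⟨_, _, hb2, _⟩
          · exact ⟨h1', hcs.1⟩
          · exact absurd hcs.1 (by simp only []; omega)
          · exact absurd hb2 (by simp only []; omega)
        refine ⟨u, hu, hu1.1, ?_⟩
        intro h'
        have := congrArg (fun p => (Prod.snd p).val) h'
        simp only [] at this
        omega
    have := dom_card_lb2 hsub hdomT i hbT ht1T rfl ht1i ht1ne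
    omega

-- ===== criticality: cross edges =====

lemma crit_xx (hk : 1 ≤ k) (j : Fin (k+1)) (hj : j ≠ Fin.last k) (a b : Fin 5)
    (ha : a.val ≤ 1) (hb : b.val ≤ 1) (m : ℕ) (hm : m ≤ k + 1)
    (h : DWinS ((HkGraph k).deleteEdges
      {s(((Fin.last k, a) : Fin (k+1) × Fin 5),((j,b)))}) m ∅ ∅) : False := by
  classical
  set lk := Fin.last k with hlk
  set e := s(((lk, a) : Fin (k+1) × Fin 5),((j,b))) with he
  set G' := (HkGraph k).deleteEdges {e} with hG'
  have hsub : ∀ u v, G'.Adj u v → (HkGraph k).Adj u v :=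
    fun u v h => (SimpleGraph.deleteEdges_adj.1 h).1
  have hjv : j.val ≠ k := by
    intro h
    exact hj (Fin.ext (by simp [hlk, h]))
  set oa : Fin 5 := flipx a with hoadef
  have hoa : oa.val ≤ 1 := flipx_le a
  have hoane : oa ≠ a := flipx_ne a ha
  have hjlk : j ≠ lk := hj
  have hempty : ¬ IsDomSet G' ∅ := by
    intro h
    have := dom_card_lb hsub (T := (∅ : Finset (Fin (k+1) × Fin 5))) (by simpa using h)
    simpa using this
  rcases h with h | ⟨_, hall⟩
  · exact hempty h
  · cases m with
    | zero =>
      have h1 := hall ((lk,oa)) (by simp)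
      rw [DWin] at h1
      exact hempty h1
    | succ m' =>
      have h1 := hall ((lk,oa)) (by simp)
      rw [DWin] at h1
      rcases h1 with h | ⟨v1, hv1, h1⟩
      · exact hempty h
      rcases h1 with h | ⟨_, hall2⟩
      · have := dom_card_lb hsub (T := ({v1} : Finset (Fin (k+1) × Fin 5)))
          (by simpa using h)
        simp at this
        omega
      · have hv1w1 : v1 ≠ ((lk,oa)) := by
          intro h
          exact hv1 (Or.inr (by simp [h]))
        set w2 : Fin (k+1) × Fin 5 := if v1 = ((lk,a)) then ((j,b)) else ((lk,a)) with hw2def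
        have hjblka : ((j,b) : Fin (k+1) × Fin 5) ≠ ((lk,a)) := by
          intro h
          exact hjlk (congrArg Prod.fst h)
        have hw2 : w2 ∉ insert v1 ∅ ∪ insert ((lk,oa)) (∅ : Set (Fin (k+1) × Fin 5)) := by
          rintro (hmem | hmem)
          · simp only [Set.mem_insert_iff, Set.mem_empty_iff_false, or_false] at hmem
            by_cases hcase : v1 = ((lk,a))
            · rw [hw2def] at hmem
              simp only [hcase, if_pos] at hmem
              exact hjblka hmem
            · rw [hw2def] at hmem
              simp only [hcase, if_neg, if_false] at hmem
              exact hcase hmem.symm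
          · simp only [Set.mem_insert_iff, Set.mem_empty_iff_false, or_false] at hmem
            by_cases hcase : v1 = ((lk,a))
            · rw [hw2def] at hmem
              simp only [hcase, if_pos] at hmem
              exact hjlk (congrArg Prod.fst hmem)
            · rw [hw2def] at hmem
              simp only [hcase, if_neg, if_false] at hmem
              exact hoane (congrArg Prod.snd hmem).symm
        have h2 := hall2 w2 hw2
        obtain ⟨T', hc, hdisj, hdom⟩ := dwin_extract G' m' _ _ h2
        set T : Finset (Fin (k+1) × Fin 5) := insert v1 T' with hT
        have hdomT : IsDomSet G' ↑T := by
          have heq : (insert v1 (∅ : Set (Fin (k+1) × Fin 5)) ∪ ↑T') = ↑T := by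
            rw [hT, Finset.coe_insert]
            simp [Set.insert_union]
          rw [← heq]
          exact hdom
        have hcT : T.card ≤ m' + 1 := le_trans (Finset.card_insert_le _ _) (by omega)
        have hw2T' : w2 ∉ T' := fun h => hdisj _ h (Set.mem_insert _ _)
        have hoaT' : ((lk,oa)) ∉ T' := fun h =>
          hdisj _ h (Set.mem_insert_of_mem _ (Set.mem_insert _ _))
        have hnoa : ((lk,oa)) ∉ T := by
          intro hmem
          rcases Finset.mem_insert.1 hmem with h | h
          · exact hv1w1 h.symm
          · exact hoaT' h
        by_cases hcase : v1 = ((lk,a))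
        · -- Staller took (lk,oa) and (j,b); Dominator has (lk,a)
          have hw2e : w2 = ((j,b)) := by rw [hw2def, if_pos hcase]
          have hnb : ((j,b)) ∉ T := by
            intro hmem
            rcases Finset.mem_insert.1 hmem with h | h
            · exact hjblka (h.trans hcase)
            · exact hw2T' (hw2e ▸ h)
          obtain ⟨t0, ht0T, ht0j, ht0y⟩ : ∃ t0 ∈ T, t0.1 = j ∧ 2 ≤ t0.2.val := by
            rcases hdomT ((j,b)) with h | ⟨u, hu, hadj⟩
            · exact absurd h hnb
            · obtain ⟨hadj', hne⟩ := SimpleGraph.deleteEdges_adj.1 hadj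
              rcases hk_adj.1 hadj' with ⟨h1', hcs | hcs⟩ | ⟨hne1, hu2, _, hkk⟩
              · exact absurd hcs.2 (by simp only []; omega)
              · exact ⟨u, hu, h1', hcs.2⟩
              · exfalso
                have hu1 : u.1 = lk := by
                  rcases hkk with h' | h'
                  · exact Fin.ext (by simp [hlk, h'])
                  · exact absurd h' (by simpa using hjv)
                rcases fin5_two a ha u.2 hu2 with h' | h'
                · have hue : u = ((lk,a)) := Prod.ext hu1 h'
                  exact hne (by rw [hue]; exact Set.mem_singleton _)
                · have hue : u = ((lk,oa)) := Prod.ext hu1 h'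
                  exact hnoa (hue ▸ hu)
          set c' : Fin 5 := if t0.2.val = 2 then 3 else 2 with hc'def
          have hc'2 : 2 ≤ c'.val ∧ c' ≠ t0.2 := by
            by_cases h : t0.2.val = 2 <;> simp [hc'def, h, Fin.ext_iff] <;> omega
          obtain ⟨t1, ht1T, ht1j, ht1ne⟩ : ∃ t1 ∈ T, t1.1 = j ∧ t0 ≠ t1 := by
            rcases hdomT ((j,c')) with h | ⟨u, hu, hadj⟩
            · refine ⟨(j,c'), h, rfl, ?_⟩
              intro h'
              exact hc'2.2 (congrArg Prod.snd h').symm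
            · have hu1 : u.1 = j ∧ u.2.val ≤ 1 := by
                rcases hk_adj.1 (hsub _ _ hadj) with ⟨h1', hcs | hcs⟩ | ⟨_, _, hb2, _⟩
                · exact ⟨h1', hcs.1⟩
                · exact absurd hcs.1 (by simp only []; omega)
                · exact absurd hb2 (by simp only []; omega)
              refine ⟨u, hu, hu1.1, ?_⟩
              intro h'
              have := congrArg (fun p => (Prod.snd p).val) h'
              omega
          have := dom_card_lb2 hsub hdomT j ht0T ht1T ht0j ht1j ht1ne
          omega
        · -- Staller took both (lk,oa) and (lk,a)
          have hw2e : w2 = ((lk,a)) := by rw [hw2def, if_neg hcase]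
          have hna : ((lk,a)) ∉ T := by
            intro hmem
            rcases Finset.mem_insert.1 hmem with h | h
            · exact hcase h.symm
            · exact hw2T' (hw2e ▸ h)
          have hy : ∀ cy : Fin 5, 2 ≤ cy.val → ((lk,cy)) ∈ T := by
            intro cy hcy
            rcases hdomT ((lk,cy)) with h | ⟨u, hu, hadj⟩
            · exact h
            · exfalso
              have hu1 : u.1 = lk ∧ u.2.val ≤ 1 := by
                rcases hk_adj.1 (hsub _ _ hadj) with ⟨h1', hcs | hcs⟩ | ⟨_, _, hb2, _⟩
                · exact ⟨h1', hcs.1⟩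
                · exact absurd hcs.1 (by simp only []; omega)
                · exact absurd hb2 (by simp only []; omega)
              rcases fin5_two a ha u.2 hu1.2 with h' | h'
              · exact hna ((Prod.ext hu1.1 h' : u = ((lk,a))) ▸ hu)
              · exact hnoa ((Prod.ext hu1.1 h' : u = ((lk,oa))) ▸ hu)
          have h2T := hy 2 (by decide)
          have h3T := hy 3 (by decide)
          have hne23 : ((lk,(2:Fin 5)) : Fin (k+1) × Fin 5) ≠ ((lk,3)) := by
            intro h
            have h2 : (2 : Fin 5) = 3 := congrArg Prod.snd h
            exact absurd h2 (by decide)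
          have := dom_card_lb2 hsub hdomT lk h2T h3T rfl rfl hne23
          omega

-- ===== edge classification =====

lemma edge_class {k : ℕ} {e : Sym2 (Fin (k+1) × Fin 5)} (he : e ∈ (HkGraph k).edgeSet) :
    (∃ (i : Fin (k+1)) (a b : Fin 5), a.val ≤ 1 ∧ 2 ≤ b.val ∧ e = s(((i,a)),((i,b)))) ∨
    (∃ (j : Fin (k+1)) (a b : Fin 5), j ≠ Fin.last k ∧ a.val ≤ 1 ∧ b.val ≤ 1 ∧
      e = s(((Fin.last k, a)),((j,b)))) := by
  induction e using Sym2.ind with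
  | _ u v =>
    rw [SimpleGraph.mem_edgeSet] at he
    rcases hk_adj.1 he with ⟨h1, ⟨hu, hv⟩ | ⟨hv, hu⟩⟩ | ⟨hne, hu, hv, hc | hc⟩
    · refine Or.inl ⟨u.1, u.2, v.2, hu, hv, ?_⟩
      have h2 : ((u.1, v.2) : Fin (k+1) × Fin 5) = v := Prod.ext h1 rfl
      rw [h2]
    · refine Or.inl ⟨v.1, v.2, u.2, hv, hu, ?_⟩
      have h2 : ((v.1, u.2) : Fin (k+1) × Fin 5) = u := Prod.ext h1.symm rfl
      rw [h2]
      exact Sym2.eq_swap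
    · have hu1 : u.1 = Fin.last k := Fin.ext (by simp [hc])
      refine Or.inr ⟨v.1, u.2, v.2, ?_, hu, hv, ?_⟩
      · intro h
        exact hne (hu1.trans h.symm)
      · rw [← hu1]
    · have hv1 : v.1 = Fin.last k := Fin.ext (by simp [hc])
      refine Or.inr ⟨u.1, v.2, u.2, ?_, hv, hu, ?_⟩
      · intro h
        exact hne (h.trans hv1.symm)
      · rw [← hv1]
        exact Sym2.eq_swap


/-- For every `k ≥ 1`, the graph `H_k` is `(k+1)`-`γ'_MB`-critical: `γ'_MB(H_k) = k + 1`, and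
`γ'_MB(H_k − e) > k + 1` for every edge `e` of `H_k`. -/
theorem Hk_is_kplus1_gammaMB'_critical (k : ℕ) (hk : 1 ≤ k) :
    gammaMB' (HkGraph k) = (k : ℕ∞) + 1 ∧
      ∀ e ∈ (HkGraph k).edgeSet,
        (k : ℕ∞) + 1 < gammaMB' ((HkGraph k).deleteEdges {e}) := by
  refine ⟨hk_gamma hk, ?_⟩
  intro e he
  have key : ∀ m : ℕ, DWinS ((HkGraph k).deleteEdges {e}) m ∅ ∅ → k + 2 ≤ m := by
    intro m hm
    by_contra hlt
    push_neg at hlt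
    rcases edge_class he with ⟨i, a, b, ha, hb, rfl⟩ | ⟨j, a, b, hj, ha, hb, rfl⟩
    · exact crit_xy hk i a b ha hb m (by omega) hm
    · exact crit_xx hk j hj a b ha hb m (by omega) hm
  have h1 : ((k:ℕ∞)+2) ≤ gammaMB' ((HkGraph k).deleteEdges {e}) := by
    refine le_sInf ?_
    rintro x ⟨m, hm, rfl⟩
    have hle := key m hm
    have : ((k+2:ℕ):ℕ∞) ≤ (m:ℕ∞) := by exact_mod_cast hle
    calc (k:ℕ∞)+2 = ((k+2:ℕ):ℕ∞) := by push_cast; ring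
      _ ≤ (m:ℕ∞) := this
  have hlt2 : (k:ℕ∞)+1 < (k:ℕ∞)+2 := by
    calc (k:ℕ∞)+1 = ((k+1:ℕ):ℕ∞) := by push_cast; ring
      _ < ((k+2:ℕ):ℕ∞) := by exact_mod_cast (by omega : k+1 < k+2)
      _ = (k:ℕ∞)+2 := by push_cast; ring
  exact lt_of_lt_of_le hlt2 h1
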